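/- Let G be a finite digraph regular of in-degree h and set the threshold t = h. Then G synchronizes from an initial active set S if and only if the induced subdigraph on V(G) \ S contains no directed cycle. -/

import Mathlib

open Finset

-- One step of the activation process: a vertex becomes active
-- if at least `t` of its in-neighbors are active.
open Classical in
noncomputable def actStep {V : Type*} [Fintype V] (E : V → V → Prop) (t : ℕ)
    (S : Finset V) : Finset V :=
  S ∪ Finset.univ.filter (fun v => t ≤ (S.filter (fun u => E u v)).card)

/-- `activeSets E t S i` is the set of active vertices after `i` steps. -/
noncomputable def activeSets {V : Type*} [Fintype V] (E : V → V → Prop) (t : ℕ)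
    (S : Finset V) (i : ℕ) : Finset V :=
  (actStep E t)^[i] S

-- The least number of steps needed to activate all vertices (`⊤` if never).
open Classical in
noncomputable def syncTime {V : Type*} [Fintype V] (E : V → V → Prop) (t : ℕ)
    (S : Finset V) : ℕ∞ :=
  if h : ∃ i, activeSets E t S i = Finset.univ then (Nat.find h : ℕ∞) else ⊤

/-- The higher diameter `d_{st}`: the max of `syncTime` over all `s`-subsets. -/
noncomputable def higherDiam {V : Type*} [Fintype V] (E : V → V → Prop) (t s : ℕ) : ℕ∞ :=
  ⨆ S : {S : Finset V // S.card = s}, syncTime E t S.1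

/-- There is a directed cycle of length `m` in the digraph `E`, all of whose
vertices lie in `T`. -/
def cycleIn {V : Type*} (E : V → V → Prop) (T : Set V) (m : ℕ) : Prop :=
  0 < m ∧ ∃ c : ZMod m → V, Function.Injective c ∧ (∀ i, c i ∈ T) ∧
    ∀ i, E (c i) (c (i + 1))

/-- There is a directed cycle of length `m` in the digraph `E`. -/
def hasCycle {V : Type*} (E : V → V → Prop) (m : ℕ) : Prop :=
  0 < m ∧ ∃ c : ZMod m → V, Function.Injective c ∧ ∀ i, E (c i) (c (i + 1))

lemma activeSets_succ {V : Type*} [Fintype V] (E : V → V → Prop) (t : ℕ)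
    (S : Finset V) (i : ℕ) :
    activeSets E t S (i+1) = actStep E t (activeSets E t S i) := by
  simp [activeSets, Function.iterate_succ_apply']

lemma activeSets_mono {V : Type*} [Fintype V] (E : V → V → Prop) (t : ℕ)
    (S : Finset V) : Monotone (activeSets E t S) := by
  apply monotone_nat_of_le_succ
  intro i
  rw [activeSets_succ]
  unfold actStep
  classical
  exact Finset.subset_union_left

open Classical in
lemma mem_actStep {V : Type*} [Fintype V] (E : V → V → Prop) (t : ℕ)
    (S : Finset V) (v : V) :
    v ∈ actStep E t S ↔ v ∈ S ∨ t ≤ (S.filter (fun u => E u v)).card := by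
  unfold actStep
  classical
  simp


-- For a digraph regular of in-degree `h` with threshold `t = h`: `G` synchronizes
-- from `S` iff the induced subdigraph on `V \ S` contains no directed cycle.
open Classical in
theorem stmt_5 {V : Type*} [Fintype V] (E : V → V → Prop) (h : ℕ)
    (hreg : ∀ v : V, (Finset.univ.filter (fun u => E u v)).card = h) (S : Finset V) :
    (∃ i, activeSets E h S i = Finset.univ) ↔ ¬ ∃ m, cycleIn E {v | v ∉ S} m := by
  classical
  constructor
  · rintro ⟨i, hi⟩ ⟨m, hm, c, hinj, hT, hE⟩
    haveI : NeZero m := ⟨hm.ne'⟩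
    have key : ∀ n (j : ZMod m), c j ∉ activeSets E h S n := by
      intro n
      induction n with
      | zero => intro j; simpa [activeSets] using hT j
      | succ n ih =>
        intro j hj
        rw [activeSets_succ, mem_actStep] at hj
        rcases hj with hj | hj
        · exact ih j hj
        · have hlt : ((activeSets E h S n).filter (fun u => E u (c j))).card < h := by
            have hss : (activeSets E h S n).filter (fun u => E u (c j)) ⊂
                Finset.univ.filter (fun u => E u (c j)) := by
              constructor
              · intro u hu
                simp only [Finset.mem_filter] at hu ⊢
                exact ⟨Finset.mem_univ u, hu.2⟩
              · intro hsub
                have hmem : c (j-1) ∈ Finset.univ.filter (fun u => E u (c j)) := by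
                  simp only [Finset.mem_filter]
                  refine ⟨Finset.mem_univ _, ?_⟩
                  have := hE (j - 1)
                  simpa using this
                have := hsub hmem
                exact ih (j-1) (Finset.mem_filter.mp this).1
            have := Finset.card_lt_card hss
            rw [hreg (c j)] at this
            exact this
          omega
    have : c 0 ∈ activeSets E h S i := hi ▸ Finset.mem_univ _
    exact key i 0 this
  · intro hnc
    by_contra hA
    push_neg at hA
    -- find a fixed point of the process
    have hcard : ∀ i, i ≤ (activeSets E h S i).card ∨
        ∃ j, activeSets E h S (j+1) = activeSets E h S j := by
      intro i
      induction i with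
      | zero => left; omega
      | succ i ih =>
        rcases ih with hle | hfix
        · by_cases hstep : activeSets E h S (i+1) = activeSets E h S i
          · right; exact ⟨i, hstep⟩
          · left
            have hss : activeSets E h S i ⊂ activeSets E h S (i+1) :=
              (activeSets_mono E h S (Nat.le_succ i)).ssubset_of_ne (Ne.symm hstep)
            have := Finset.card_lt_card hss
            omega
        · right; exact hfix
    have hfix : ∃ j, activeSets E h S (j+1) = activeSets E h S j := by
      rcases hcard (Fintype.card V) with hle | hfix
      · exfalso
        apply hA (Fintype.card V)
        apply Finset.eq_univ_of_card
        have := Finset.card_le_univ (activeSets E h S (Fintype.card V))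
        omega
      · exact hfix
    obtain ⟨j, hj⟩ := hfix
    set A := activeSets E h S j with hAdef
    -- each inactive vertex has an inactive in-neighbor
    have hstep : ∀ v : V, v ∉ A → ∃ u, u ∉ A ∧ E u v := by
      intro v hv
      by_contra hc
      push_neg at hc
      have hsub : Finset.univ.filter (fun u => E u v) ⊆ A.filter (fun u => E u v) := by
        intro u hu
        simp only [Finset.mem_filter] at hu ⊢
        refine ⟨?_, hu.2⟩
        by_contra hnA
        exact hc u hnA hu.2
      have hcard : h ≤ (A.filter (fun u => E u v)).card := by
        rw [← hreg v]; exact Finset.card_le_card hsub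
      have : v ∈ activeSets E h S (j+1) := by
        rw [activeSets_succ, mem_actStep]
        exact Or.inr hcard
      rw [hj] at this
      exact hv this
    obtain ⟨v₀, hv₀⟩ : ∃ v : V, v ∉ A := by
      by_contra hc
      push_neg at hc
      exact hA j (Finset.eq_univ_iff_forall.mpr hc)
    have hTg : ∀ v : {v : V // v ∉ A}, ∃ u : {v : V // v ∉ A}, E u.1 v.1 := by
      rintro ⟨v, hv⟩
      obtain ⟨u, hu, he⟩ := hstep v hv
      exact ⟨⟨u, hu⟩, he⟩
    choose g hg using hTg
    set sq : ℕ → {v : V // v ∉ A} := fun n => g^[n] ⟨v₀, hv₀⟩ with hsqdef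
    have hsq : ∀ n, E (sq (n+1)).1 (sq n).1 := by
      intro n
      have : sq (n+1) = g (sq n) := Function.iterate_succ_apply' g n _
      rw [this]
      exact hg _
    -- pigeonhole: a repeat exists, take the earliest one
    obtain ⟨b, a, hab, hsab, hseqinj⟩ :
        ∃ b a, a < b ∧ sq a = sq b ∧ ∀ p q, p < b → q < b → sq p = sq q → p = q := by
      have hrep : ∃ b, ∃ a, a < b ∧ sq a = sq b := by
        obtain ⟨x, y, hxy, heq⟩ := Finite.exists_ne_map_eq_of_infinite sq
        rcases lt_or_gt_of_ne hxy with hlt | hlt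
        · exact ⟨y, x, hlt, heq⟩
        · exact ⟨x, y, hlt, heq.symm⟩
      refine ⟨Nat.find hrep, ?_⟩
      obtain ⟨a, hab, hsab⟩ := Nat.find_spec hrep
      refine ⟨a, hab, hsab, ?_⟩
      intro p q hp hq hpq
      by_contra hne
      rcases lt_or_gt_of_ne hne with hlt | hlt
      · exact Nat.find_min hrep hq ⟨p, hlt, hpq⟩
      · exact Nat.find_min hrep hp ⟨q, hlt, hpq.symm⟩
    obtain ⟨m, hmdef⟩ : ∃ m, m = b - a := ⟨b - a, rfl⟩
    have hm : 0 < m := by omega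
    haveI : NeZero m := ⟨hm.ne'⟩
    -- periodicity helper
    have hper : sq (a + m) = sq a := by
      have : a + m = b := by omega
      rw [this, hsab]
    refine hnc ⟨m, hm, fun i => (sq (a + (m - 1 - i.val))).1, ?_, ?_, ?_⟩
    · intro i1 i2 heq
      have h1 : i1.val < m := ZMod.val_lt i1
      have h2 : i2.val < m := ZMod.val_lt i2
      have e1 : a + (m - 1 - i1.val) < b := by omega
      have e2 : a + (m - 1 - i2.val) < b := by omega
      have := hseqinj _ _ e1 e2 (Subtype.ext heq)
      have hval : i1.val = i2.val := by omega
      exact ZMod.val_injective m hval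
    · intro i
      exact (sq _).2 ∘ (fun hvS => activeSets_mono E h S (Nat.zero_le j)
        (by simpa [activeSets] using hvS))
    · intro i
      have hk : i.val < m := ZMod.val_lt i
      have hval1 : (i + 1).val = (i.val + 1) % m := by
        rw [ZMod.val_add, ZMod.val_one_eq_one_mod]
        conv_rhs => rw [Nat.add_mod, Nat.mod_eq_of_lt hk]
      show E (sq (a + (m - 1 - i.val))).1 (sq (a + (m - 1 - (i + 1).val))).1
      by_cases hcase : i.val + 1 < m
      · have : (i + 1).val = i.val + 1 := by rw [hval1]; exact Nat.mod_eq_of_lt hcase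
        rw [this]
        have harith : a + (m - 1 - i.val) = (a + (m - 1 - (i.val + 1))) + 1 := by omega
        rw [harith]
        exact hsq _
      · have hkm : i.val + 1 = m := by omega
        have : (i + 1).val = 0 := by rw [hval1, hkm]; simp
        rw [this]
        have h0 : m - 1 - i.val = 0 := by omega
        rw [h0]
        have hsw : sq (a + 0) = sq ((a + (m - 1 - 0)) + 1) := by
          have he : (a + (m - 1 - 0)) + 1 = a + m := by omega
          rw [he, hper]
          simp
        rw [hsw]
        exact hsq _
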